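/- Let d and n be positive integers, let ε > 0, and set Δ = 2 + 2√d + d/2. Let (y, x) and (y', x') be two datasets with y, y' : Fin n → ℝ, x, x' : Fin n → Fin (d+1) → ℝ that agree on all samples except the last one, and suppose every sample in both datasets is standardized: |y_i| ≤ 1, x_{i0} = 1, and |x_{ij}| ≤ 1/√d for j ∈ {1,…,d}. Define for each dataset the logistic weights w_1 = −n(3/2 + 2 log 2), w_q = 2n, w_{q²} = −(n/2 + (1/4) ∑_i y_i²), w_{p_j q} = (1/2) ∑_i y_i x_{ij} (j = 0,…,d), w_{p_j²} = −(1/4) ∑_i x_{ij}² (j = 0,…,d), and w_{p_j p_h} = −(1/4) ∑_i x_{ij} x_{ih} (j ≠ h). Then for every choice of real target values t_•, one for each weight index, the product over all weight indices of the Laplace densities (ε/(2Δ)) exp(−ε|t_• − w_•^D|/Δ) is at most exp(ε) times the product over all weight indices of (ε/(2Δ)) exp(−ε|t_• − w_•^{D'}|/Δ). -/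

import Mathlib

open Finset

/-- The Laplace density with zero mean and scale `Δ/ε`, evaluated at `t`. -/
noncomputable def lapDensity (ε Δ t : ℝ) : ℝ :=
  (ε / (2 * Δ)) * Real.exp (-(ε * |t|) / Δ)

lemma lapDensity_nonneg {ε Δ : ℝ} (hε : 0 ≤ ε) (hΔ : 0 ≤ Δ) (t : ℝ) :
    0 ≤ lapDensity ε Δ t :=
  mul_nonneg (div_nonneg hε (by linarith)) (Real.exp_pos _).le

lemma lap_ratio {ε Δ : ℝ} (hε : 0 < ε) (hΔ : 0 < Δ) {a b c : ℝ} (h : |a - b| ≤ c) :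
    lapDensity ε Δ a ≤ Real.exp (ε * c / Δ) * lapDensity ε Δ b := by
  unfold lapDensity
  rw [mul_comm (Real.exp (ε * c / Δ)), mul_assoc]
  refine mul_le_mul_of_nonneg_left ?_ (div_nonneg hε.le (by linarith))
  rw [← Real.exp_add]
  apply Real.exp_le_exp.mpr
  rw [← add_div, div_le_div_iff₀ hΔ hΔ]
  have h1 : |b| - |a| ≤ c := by
    have := abs_sub_abs_le_abs_sub b a
    rw [abs_sub_comm] at this
    linarith
  nlinarith [mul_le_mul_of_nonneg_right (mul_le_mul_of_nonneg_left h1 hε.le) hΔ.le]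

lemma prod_exp_le {α : Type*} (s : Finset α) (F G E : α → ℝ)
    (hF : ∀ j ∈ s, 0 ≤ F j)
    (h : ∀ j ∈ s, F j ≤ Real.exp (E j) * G j) :
    ∏ j ∈ s, F j ≤ Real.exp (∑ j ∈ s, E j) * ∏ j ∈ s, G j := by
  calc ∏ j ∈ s, F j ≤ ∏ j ∈ s, (Real.exp (E j) * G j) := Finset.prod_le_prod hF h
  _ = _ := by rw [Finset.prod_mul_distrib, Real.exp_sum]

lemma prod_lap_le {α : Type*} (s : Finset α) {ε Δ : ℝ} (hε : 0 < ε) (hΔ : 0 < Δ)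
    (a b c : α → ℝ) (h : ∀ j ∈ s, |a j - b j| ≤ c j) :
    ∏ j ∈ s, lapDensity ε Δ (a j)
      ≤ Real.exp (ε * (∑ j ∈ s, c j) / Δ) * ∏ j ∈ s, lapDensity ε Δ (b j) := by
  have := prod_exp_le s (fun j => lapDensity ε Δ (a j)) (fun j => lapDensity ε Δ (b j))
    (fun j => ε * c j / Δ) (fun j _ => lapDensity_nonneg hε.le hΔ.le _)
    (fun j hj => lap_ratio hε hΔ (h j hj))
  convert this using 3
  rw [Finset.mul_sum, Finset.sum_div]

set_option maxHeartbeats 2000000 in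
/-- Proposition 6: the density-ratio inequality establishing that the
differentially private logistic regression (Algorithm 2) satisfies
ε-differential privacy. -/
theorem logistic_dp_density_ratio (n d : ℕ) (hn : 0 < n) (hd : 0 < d)
    (ε : ℝ) (hε : 0 < ε) (Δ : ℝ) (hΔ : Δ = 2 + 2 * Real.sqrt d + (d : ℝ) / 2)
    (y y' : Fin n → ℝ) (x x' : Fin n → Fin (d + 1) → ℝ)
    (hagree : ∀ i : Fin n, (i : ℕ) + 1 < n → y i = y' i ∧ ∀ j, x i j = x' i j)
    (hy : ∀ i, |y i| ≤ 1) (hy' : ∀ i, |y' i| ≤ 1)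
    (hx0 : ∀ i, x i 0 = 1) (hx0' : ∀ i, x' i 0 = 1)
    (hx : ∀ i, ∀ j : Fin (d + 1), j ≠ 0 → |x i j| ≤ 1 / Real.sqrt d)
    (hx' : ∀ i, ∀ j : Fin (d + 1), j ≠ 0 → |x' i j| ≤ 1 / Real.sqrt d)
    (t1 tq tq2 : ℝ) (tpq tp2 : Fin (d + 1) → ℝ)
    (tpp : Fin (d + 1) → Fin (d + 1) → ℝ) :
    lapDensity ε Δ (t1 - (-(n : ℝ) * (3 / 2 + 2 * Real.log 2)))
      * lapDensity ε Δ (tq - 2 * (n : ℝ))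
      * lapDensity ε Δ (tq2 - (-((n : ℝ) / 2 + (1 / 4) * ∑ i, (y i) ^ 2)))
      * (∏ j, lapDensity ε Δ (tpq j - (1 / 2) * ∑ i, y i * x i j))
      * (∏ j, lapDensity ε Δ (tp2 j - (-(1 / 4) * ∑ i, (x i j) ^ 2)))
      * (∏ j, ∏ h ∈ Finset.univ.erase j,
          lapDensity ε Δ (tpp j h - (-(1 / 4) * ∑ i, x i j * x i h)))
    ≤ Real.exp ε *
      (lapDensity ε Δ (t1 - (-(n : ℝ) * (3 / 2 + 2 * Real.log 2)))
        * lapDensity ε Δ (tq - 2 * (n : ℝ))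
        * lapDensity ε Δ (tq2 - (-((n : ℝ) / 2 + (1 / 4) * ∑ i, (y' i) ^ 2)))
        * (∏ j, lapDensity ε Δ (tpq j - (1 / 2) * ∑ i, y' i * x' i j))
        * (∏ j, lapDensity ε Δ (tp2 j - (-(1 / 4) * ∑ i, (x' i j) ^ 2)))
        * (∏ j, ∏ h ∈ Finset.univ.erase j,
            lapDensity ε Δ (tpp j h - (-(1 / 4) * ∑ i, x' i j * x' i h)))) := by
  have hdpos : (0:ℝ) < d := by exact_mod_cast hd
  set s : ℝ := Real.sqrt d with hsdef
  have hs0 : 0 < s := Real.sqrt_pos.mpr hdpos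
  have hs2 : s * s = d := Real.mul_self_sqrt (Nat.cast_nonneg d)
  have hΔ0 : 0 < Δ := by rw [hΔ]; positivity
  -- the last index
  have hmlt : n - 1 < n := Nat.sub_lt hn one_pos
  set m : Fin n := ⟨n - 1, hmlt⟩ with hmdef
  have hoff : ∀ i : Fin n, i ≠ m → y i = y' i ∧ ∀ j, x i j = x' i j := by
    intro i hi
    apply hagree
    have h1 : (i : ℕ) ≠ n - 1 := fun h => hi (Fin.ext h)
    have h2 := i.isLt
    omega
  have hdiff : ∀ f g : Fin n → ℝ, (∀ i, i ≠ m → f i = g i) →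
      (∑ i, f i) - (∑ i, g i) = f m - g m := by
    intro f g h
    rw [← Finset.sum_sub_distrib, ← Finset.add_sum_erase _ _ (Finset.mem_univ m),
      Finset.sum_eq_zero, add_zero]
    intro i hi
    rw [h i (Finset.ne_of_mem_erase hi)]; ring
  -- the bound function
  set B : Fin (d + 1) → ℝ := fun j => if j = 0 then 1 else 1 / s with hBdef
  have hBnn : ∀ j, 0 ≤ B j := by
    intro j
    by_cases hj : j = 0 <;> simp [hBdef, hj] <;> positivity
  have hB : ∀ i j, |x i j| ≤ B j := by
    intro i j
    by_cases hj : j = 0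
    · simp [hBdef, hj, hx0 i]
    · simpa [hBdef, hj] using hx i j hj
  have hB' : ∀ i j, |x' i j| ≤ B j := by
    intro i j
    by_cases hj : j = 0
    · simp [hBdef, hj, hx0' i]
    · simpa [hBdef, hj] using hx' i j hj
  -- sums of B
  have hsumB : ∑ j, B j = 1 + s := by
    rw [Fin.sum_univ_succ]
    simp only [hBdef, if_pos rfl, Fin.succ_ne_zero, if_neg (Fin.succ_ne_zero _),
      Finset.sum_const, Finset.card_univ, Fintype.card_fin, nsmul_eq_mul]
    have : (d : ℝ) * (1 / s) = s := by field_simp; linarith [hs2]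
    rw [this]
  have hsumB2 : ∑ j, B j * B j = 2 := by
    rw [Fin.sum_univ_succ]
    simp only [hBdef, if_pos rfl, Fin.succ_ne_zero, if_neg (Fin.succ_ne_zero _),
      Finset.sum_const, Finset.card_univ, Fintype.card_fin, nsmul_eq_mul]
    have : (d : ℝ) * (1 / s * (1 / s)) = 1 := by field_simp; linarith [hs2]
    rw [this]; norm_num
  -- sum of pair bounds
  have hT6 : ∑ j, ∑ h ∈ Finset.univ.erase j, (B j * B h / 2)
      = (1 + s) * (1 + s) / 2 - 1 := by
    have step1 : ∀ j : Fin (d + 1), ∑ h ∈ Finset.univ.erase j, (B j * B h / 2)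
        = B j * (1 + s) / 2 - B j * B j / 2 := by
      intro j
      rw [Finset.sum_erase_eq_sub (Finset.mem_univ j)]
      have : ∑ h, B j * B h / 2 = B j * (1 + s) / 2 := by
        rw [← Finset.sum_div, ← Finset.mul_sum, hsumB]
      rw [this]
    rw [Finset.sum_congr rfl fun j _ => step1 j, Finset.sum_sub_distrib]
    have h1 : ∑ j, B j * (1 + s) / 2 = (1 + s) * (1 + s) / 2 := by
      rw [← Finset.sum_div, ← Finset.sum_mul, hsumB]
    have h2 : ∑ j, B j * B j / 2 = 1 := by
      rw [← Finset.sum_div, hsumB2]; norm_num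
    rw [h1, h2]
  -- factor 3
  have h3 : lapDensity ε Δ (tq2 - (-((n : ℝ) / 2 + (1 / 4) * ∑ i, (y i) ^ 2)))
      ≤ Real.exp (ε * (1 / 2) / Δ) *
        lapDensity ε Δ (tq2 - (-((n : ℝ) / 2 + (1 / 4) * ∑ i, (y' i) ^ 2))) := by
    apply lap_ratio hε hΔ0
    have hd3 : (∑ i, (y i) ^ 2) - (∑ i, (y' i) ^ 2) = (y m) ^ 2 - (y' m) ^ 2 :=
      hdiff _ _ fun i hi => by rw [(hoff i hi).1]
    have h1 : (y m) ^ 2 ≤ 1 := by nlinarith [hy m, abs_nonneg (y m), sq_abs (y m)]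
    have h2 : (y' m) ^ 2 ≤ 1 := by nlinarith [hy' m, abs_nonneg (y' m), sq_abs (y' m)]
    rw [show (tq2 - (-((n : ℝ) / 2 + (1 / 4) * ∑ i, (y i) ^ 2)))
        - (tq2 - (-((n : ℝ) / 2 + (1 / 4) * ∑ i, (y' i) ^ 2)))
        = (1 / 4) * ((∑ i, (y i) ^ 2) - (∑ i, (y' i) ^ 2)) from by ring, hd3]
    rw [abs_le]
    constructor <;> nlinarith [sq_nonneg (y m), sq_nonneg (y' m)]
  -- factor 4
  have h4 : (∏ j, lapDensity ε Δ (tpq j - (1 / 2) * ∑ i, y i * x i j))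
      ≤ Real.exp (ε * (1 + s) / Δ) *
        ∏ j, lapDensity ε Δ (tpq j - (1 / 2) * ∑ i, y' i * x' i j) := by
    have := prod_lap_le Finset.univ hε hΔ0
      (fun j => tpq j - (1 / 2) * ∑ i, y i * x i j)
      (fun j => tpq j - (1 / 2) * ∑ i, y' i * x' i j) B ?_
    · rwa [hsumB] at this
    intro j _
    have hd4 : (∑ i, y i * x i j) - (∑ i, y' i * x' i j)
        = y m * x m j - y' m * x' m j :=
      hdiff _ _ fun i hi => by rw [(hoff i hi).1, (hoff i hi).2 j]
    have e1 : |y m * x m j| ≤ B j := by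
      rw [abs_mul]
      calc |y m| * |x m j| ≤ 1 * B j :=
            mul_le_mul (hy m) (hB m j) (abs_nonneg _) zero_le_one
        _ = B j := one_mul _
    have e2 : |y' m * x' m j| ≤ B j := by
      rw [abs_mul]
      calc |y' m| * |x' m j| ≤ 1 * B j :=
            mul_le_mul (hy' m) (hB' m j) (abs_nonneg _) zero_le_one
        _ = B j := one_mul _
    rw [show (tpq j - (1 / 2) * ∑ i, y i * x i j)
        - (tpq j - (1 / 2) * ∑ i, y' i * x' i j)
        = (1 / 2) * ((∑ i, y' i * x' i j) - (∑ i, y i * x i j)) from by ring,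
      abs_mul, abs_sub_comm, hd4]
    have h12 : |(1:ℝ) / 2| = 1 / 2 := by norm_num
    rw [h12]
    have := abs_sub (y m * x m j) (y' m * x' m j)
    linarith
  -- factor 5
  have h5 : (∏ j, lapDensity ε Δ (tp2 j - (-(1 / 4) * ∑ i, (x i j) ^ 2)))
      ≤ Real.exp (ε * 1 / Δ) *
        ∏ j, lapDensity ε Δ (tp2 j - (-(1 / 4) * ∑ i, (x' i j) ^ 2)) := by
    have := prod_lap_le Finset.univ hε hΔ0
      (fun j => tp2 j - (-(1 / 4) * ∑ i, (x i j) ^ 2))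
      (fun j => tp2 j - (-(1 / 4) * ∑ i, (x' i j) ^ 2)) (fun j => B j * B j / 2) ?_
    · rwa [show ∑ j, (B j * B j / 2) = 1 from by rw [← Finset.sum_div, hsumB2]; norm_num]
        at this
    intro j _
    have hd5 : (∑ i, (x i j) ^ 2) - (∑ i, (x' i j) ^ 2) = (x m j) ^ 2 - (x' m j) ^ 2 :=
      hdiff _ _ fun i hi => by rw [(hoff i hi).2 j]
    have e1 : (x m j) ^ 2 ≤ B j * B j := by
      nlinarith [hB m j, abs_nonneg (x m j), sq_abs (x m j), hBnn j]
    have e2 : (x' m j) ^ 2 ≤ B j * B j := by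
      nlinarith [hB' m j, abs_nonneg (x' m j), sq_abs (x' m j), hBnn j]
    rw [show (tp2 j - (-(1 / 4) * ∑ i, (x i j) ^ 2))
        - (tp2 j - (-(1 / 4) * ∑ i, (x' i j) ^ 2))
        = (1 / 4) * ((∑ i, (x i j) ^ 2) - (∑ i, (x' i j) ^ 2)) from by ring, hd5]
    rw [abs_le]
    constructor <;> nlinarith [sq_nonneg (x m j), sq_nonneg (x' m j)]
  -- factor 6
  have h6 : (∏ j, ∏ h ∈ Finset.univ.erase j,
        lapDensity ε Δ (tpp j h - (-(1 / 4) * ∑ i, x i j * x i h)))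
      ≤ Real.exp (ε * ((1 + s) * (1 + s) / 2 - 1) / Δ) *
        ∏ j, ∏ h ∈ Finset.univ.erase j,
          lapDensity ε Δ (tpp j h - (-(1 / 4) * ∑ i, x' i j * x' i h)) := by
    have key := prod_exp_le Finset.univ
      (fun j => ∏ h ∈ Finset.univ.erase j,
        lapDensity ε Δ (tpp j h - (-(1 / 4) * ∑ i, x i j * x i h)))
      (fun j => ∏ h ∈ Finset.univ.erase j,
        lapDensity ε Δ (tpp j h - (-(1 / 4) * ∑ i, x' i j * x' i h)))
      (fun j => ε * (∑ h ∈ Finset.univ.erase j, (B j * B h / 2)) / Δ)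
      (fun j _ => Finset.prod_nonneg fun h _ => lapDensity_nonneg hε.le hΔ0.le _) ?_
    · have hrw : ∑ j, (ε * (∑ h ∈ Finset.univ.erase j, (B j * B h / 2)) / Δ)
          = ε * ((1 + s) * (1 + s) / 2 - 1) / Δ := by
        rw [← hT6, Finset.mul_sum, Finset.sum_div]
      rwa [hrw] at key
    intro j _
    apply prod_lap_le (Finset.univ.erase j) hε hΔ0
      (fun h => tpp j h - (-(1 / 4) * ∑ i, x i j * x i h))
      (fun h => tpp j h - (-(1 / 4) * ∑ i, x' i j * x' i h))
      (fun h => B j * B h / 2)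
    intro h _
    have hd6 : (∑ i, x i j * x i h) - (∑ i, x' i j * x' i h)
        = x m j * x m h - x' m j * x' m h :=
      hdiff _ _ fun i hi => by rw [(hoff i hi).2 j, (hoff i hi).2 h]
    have e1 : |x m j * x m h| ≤ B j * B h := by
      rw [abs_mul]
      exact mul_le_mul (hB m j) (hB m h) (abs_nonneg _) (hBnn j)
    have e2 : |x' m j * x' m h| ≤ B j * B h := by
      rw [abs_mul]
      exact mul_le_mul (hB' m j) (hB' m h) (abs_nonneg _) (hBnn j)
    rw [show (tpp j h - (-(1 / 4) * ∑ i, x i j * x i h))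
        - (tpp j h - (-(1 / 4) * ∑ i, x' i j * x' i h))
        = (1 / 4) * ((∑ i, x i j * x i h) - (∑ i, x' i j * x' i h)) from by ring,
      abs_mul, hd6]
    have h14 : |(1:ℝ) / 4| = 1 / 4 := by norm_num
    rw [h14]
    have := abs_sub (x m j * x m h) (x' m j * x' m h)
    linarith
  -- combine
  have nnF : ∀ t : ℝ, 0 ≤ lapDensity ε Δ t := lapDensity_nonneg hε.le hΔ0.le
  have nn4 : 0 ≤ ∏ j, lapDensity ε Δ (tpq j - (1 / 2) * ∑ i, y i * x i j) :=
    Finset.prod_nonneg fun j _ => nnF _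
  have nn5 : 0 ≤ ∏ j, lapDensity ε Δ (tp2 j - (-(1 / 4) * ∑ i, (x i j) ^ 2)) :=
    Finset.prod_nonneg fun j _ => nnF _
  have nn6 : 0 ≤ ∏ j, ∏ h ∈ Finset.univ.erase j,
      lapDensity ε Δ (tpp j h - (-(1 / 4) * ∑ i, x i j * x i h)) :=
    Finset.prod_nonneg fun j _ => Finset.prod_nonneg fun h _ => nnF _
  have nn4' : 0 ≤ ∏ j, lapDensity ε Δ (tpq j - (1 / 2) * ∑ i, y' i * x' i j) :=
    Finset.prod_nonneg fun j _ => nnF _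
  have nn5' : 0 ≤ ∏ j, lapDensity ε Δ (tp2 j - (-(1 / 4) * ∑ i, (x' i j) ^ 2)) :=
    Finset.prod_nonneg fun j _ => nnF _
  have nn6' : 0 ≤ ∏ j, ∏ h ∈ Finset.univ.erase j,
      lapDensity ε Δ (tpp j h - (-(1 / 4) * ∑ i, x' i j * x' i h)) :=
    Finset.prod_nonneg fun j _ => Finset.prod_nonneg fun h _ => nnF _
  have hexp : Real.exp (ε * (1 / 2) / Δ) * Real.exp (ε * (1 + s) / Δ)
      * Real.exp (ε * 1 / Δ) * Real.exp (ε * ((1 + s) * (1 + s) / 2 - 1) / Δ)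
      = Real.exp ε := by
    rw [← Real.exp_add, ← Real.exp_add, ← Real.exp_add]
    congr 1
    have hΔval : (1 / 2 : ℝ) + (1 + s) + 1 + ((1 + s) * (1 + s) / 2 - 1) = Δ := by
      rw [hΔ]
      linear_combination hs2 / 2
    rw [← add_div, ← add_div, ← add_div, ← mul_add, ← mul_add,
      ← mul_add, hΔval, mul_div_assoc, div_self hΔ0.ne', mul_one]
  calc lapDensity ε Δ (t1 - (-(n : ℝ) * (3 / 2 + 2 * Real.log 2)))
      * lapDensity ε Δ (tq - 2 * (n : ℝ))
      * lapDensity ε Δ (tq2 - (-((n : ℝ) / 2 + (1 / 4) * ∑ i, (y i) ^ 2)))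
      * (∏ j, lapDensity ε Δ (tpq j - (1 / 2) * ∑ i, y i * x i j))
      * (∏ j, lapDensity ε Δ (tp2 j - (-(1 / 4) * ∑ i, (x i j) ^ 2)))
      * (∏ j, ∏ h ∈ Finset.univ.erase j,
          lapDensity ε Δ (tpp j h - (-(1 / 4) * ∑ i, x i j * x i h)))
      ≤ lapDensity ε Δ (t1 - (-(n : ℝ) * (3 / 2 + 2 * Real.log 2)))
      * lapDensity ε Δ (tq - 2 * (n : ℝ))
      * (Real.exp (ε * (1 / 2) / Δ) *
          lapDensity ε Δ (tq2 - (-((n : ℝ) / 2 + (1 / 4) * ∑ i, (y' i) ^ 2))))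
      * (Real.exp (ε * (1 + s) / Δ) *
          ∏ j, lapDensity ε Δ (tpq j - (1 / 2) * ∑ i, y' i * x' i j))
      * (Real.exp (ε * 1 / Δ) *
          ∏ j, lapDensity ε Δ (tp2 j - (-(1 / 4) * ∑ i, (x' i j) ^ 2)))
      * (Real.exp (ε * ((1 + s) * (1 + s) / 2 - 1) / Δ) *
          ∏ j, ∏ h ∈ Finset.univ.erase j,
            lapDensity ε Δ (tpp j h - (-(1 / 4) * ∑ i, x' i j * x' i h))) := by
        refine mul_le_mul (mul_le_mul (mul_le_mul
          (mul_le_mul_of_nonneg_left h3 (mul_nonneg (nnF _) (nnF _)))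
          h4 nn4 ?_) h5 nn5 ?_) h6 nn6 ?_
        · exact mul_nonneg (mul_nonneg (nnF _) (nnF _))
            (mul_nonneg (Real.exp_pos _).le (nnF _))
        · exact mul_nonneg (mul_nonneg (mul_nonneg (nnF _) (nnF _))
            (mul_nonneg (Real.exp_pos _).le (nnF _)))
            (mul_nonneg (Real.exp_pos _).le nn4')
        · exact mul_nonneg (mul_nonneg (mul_nonneg (mul_nonneg (nnF _) (nnF _))
            (mul_nonneg (Real.exp_pos _).le (nnF _)))
            (mul_nonneg (Real.exp_pos _).le nn4'))
            (mul_nonneg (Real.exp_pos _).le nn5')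
    _ = (Real.exp (ε * (1 / 2) / Δ) * Real.exp (ε * (1 + s) / Δ)
          * Real.exp (ε * 1 / Δ) * Real.exp (ε * ((1 + s) * (1 + s) / 2 - 1) / Δ)) *
        (lapDensity ε Δ (t1 - (-(n : ℝ) * (3 / 2 + 2 * Real.log 2)))
          * lapDensity ε Δ (tq - 2 * (n : ℝ))
          * lapDensity ε Δ (tq2 - (-((n : ℝ) / 2 + (1 / 4) * ∑ i, (y' i) ^ 2)))
          * (∏ j, lapDensity ε Δ (tpq j - (1 / 2) * ∑ i, y' i * x' i j))
          * (∏ j, lapDensity ε Δ (tp2 j - (-(1 / 4) * ∑ i, (x' i j) ^ 2)))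
          * (∏ j, ∏ h ∈ Finset.univ.erase j,
              lapDensity ε Δ (tpp j h - (-(1 / 4) * ∑ i, x' i j * x' i h)))) := by
        ring
    _ = _ := by rw [hexp]
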